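/- Let K be a field of characteristic zero and suppose f = Σ_{j=1}^n ε_j(U_n,X_n)·r_j(X_n) with each r_j ∈ K[X_n]^{S_n} satisfies f(X_n, X_n) = 0 (substituting u_i = x_i). Writing each r_j in terms of the elementary symmetric polynomials, if r_j = Σ_a α_{a,j} e_1^{a_1}⋯e_j^{a_j − 1}⋯e_n^{a_n}, then for every fixed exponent vector a = (a_1,…,a_n) the coefficients satisfy Σ_{j=1}^n j·α_{a,j} = 0. -/

import Mathlib

noncomputable section
open MvPolynomial Finset

/-- `ε_{q+1}(U_n, X_n) = Σ_i u_i · e_q(x_1,…,x̂_i,…,x_n)` in `K[U_n, X_n]`. -/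
def eps (K : Type*) [Field K] (n q : ℕ) : MvPolynomial (Fin n ⊕ Fin n) K :=
  ∑ i : Fin n, X (Sum.inl i) *
    ∑ S ∈ powersetCard q ((univ : Finset (Fin n)).erase i), ∏ t ∈ S, X (Sum.inr t)

/-- `e_q(X_n)`, the `q`-th elementary symmetric polynomial in the `x`-variables. -/
def ee (K : Type*) [Field K] (n q : ℕ) : MvPolynomial (Fin n ⊕ Fin n) K :=
  ∑ S ∈ powersetCard q (univ : Finset (Fin n)), ∏ t ∈ S, X (Sum.inr t)


lemma ee_eq (K : Type*) [Field K] (n q : ℕ) :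
    ee K n q = rename (Sum.inr : Fin n → Fin n ⊕ Fin n) (esymm (Fin n) K q) := by
  simp [ee, esymm, map_sum]

lemma rename_ee (K : Type*) [Field K] (n q : ℕ) :
    rename (Sum.elim Sum.inr Sum.inr : Fin n ⊕ Fin n → Fin n ⊕ Fin n) (ee K n q) = ee K n q := by
  rw [ee_eq, rename_rename]
  rfl

lemma rename_eps (K : Type*) [Field K] (n q : ℕ) :
    rename (Sum.elim Sum.inr Sum.inr : Fin n ⊕ Fin n → Fin n ⊕ Fin n) (eps K n q)
      = C ((q + 1 : ℕ) : K) * ee K n (q + 1) := by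
  classical
  have key : ∀ i : Fin n,
      (X (Sum.inr i) : MvPolynomial (Fin n ⊕ Fin n) K) *
        ∑ S ∈ powersetCard q ((univ : Finset (Fin n)).erase i), ∏ t ∈ S, X (Sum.inr t)
      = ∑ T ∈ (powersetCard (q + 1) (univ : Finset (Fin n))).filter (i ∈ ·),
          ∏ t ∈ T, X (Sum.inr t) := by
    intro i
    rw [Finset.mul_sum]
    refine Finset.sum_bij' (fun S _ => insert i S) (fun T _ => T.erase i) ?_ ?_ ?_ ?_ ?_
    · intro S hS
      simp only [mem_powersetCard, mem_filter] at hS ⊢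
      have hiS : i ∉ S := fun h => (Finset.mem_erase.1 (hS.1 h)).1 rfl
      exact ⟨⟨Finset.subset_univ _, by rw [Finset.card_insert_of_notMem hiS, hS.2]⟩,
        Finset.mem_insert_self _ _⟩
    · intro T hT
      simp only [mem_powersetCard, mem_filter] at hT ⊢
      refine ⟨Finset.erase_subset_erase i (Finset.subset_univ T), ?_⟩
      rw [Finset.card_erase_of_mem hT.2, hT.1.2]
      rfl
    · intro S hS
      simp only [mem_powersetCard] at hS
      have hiS : i ∉ S := fun h => (Finset.mem_erase.1 (hS.1 h)).1 rfl
      exact Finset.erase_insert hiS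
    · intro T hT
      simp only [mem_filter] at hT
      exact Finset.insert_erase hT.2
    · intro S hS
      simp only [mem_powersetCard] at hS
      have hiS : i ∉ S := fun h => (Finset.mem_erase.1 (hS.1 h)).1 rfl
      rw [Finset.prod_insert hiS]
  rw [eps, map_sum]
  simp only [map_mul, map_sum, map_prod, rename_X, Sum.elim_inl, Sum.elim_inr]
  rw [Finset.sum_congr rfl fun i _ => key i]
  have swap : ∑ i : Fin n, ∑ T ∈ (powersetCard (q + 1) (univ : Finset (Fin n))).filter (i ∈ ·),
      ∏ t ∈ T, (X (Sum.inr t) : MvPolynomial (Fin n ⊕ Fin n) K)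
    = ∑ T ∈ powersetCard (q + 1) (univ : Finset (Fin n)),
        (T.card : MvPolynomial (Fin n ⊕ Fin n) K) * ∏ t ∈ T, X (Sum.inr t) := by
    simp only [Finset.sum_filter]
    rw [Finset.sum_comm]
    refine Finset.sum_congr rfl fun T _ => ?_
    rw [Finset.sum_ite_mem, Finset.univ_inter, Finset.sum_const, nsmul_eq_mul]
  rw [swap, ee, Finset.mul_sum]
  refine Finset.sum_congr rfl fun T hT => ?_
  rw [(Finset.mem_powersetCard.1 hT).2]
  simp

lemma key_term {K : Type*} [Field K] {n : ℕ} (a : Fin n → ℕ) (j : Fin n) (c : K)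
    (h : c ≠ 0 → 1 ≤ a j) :
    C (((j : ℕ) + 1 : ℕ) : K) * ee K n ((j : ℕ) + 1) *
      (C c * ∏ k : Fin n, (ee K n ((k : ℕ) + 1)) ^ (if k = j then a k - 1 else a k))
    = C ((((j : ℕ) + 1 : K)) * c) * ∏ k : Fin n, (ee K n ((k : ℕ) + 1)) ^ a k := by
  by_cases hc : c = 0
  · simp [hc]
  have h1 : 1 ≤ a j := h hc
  have hprod : ee K n ((j : ℕ) + 1) *
      ∏ k : Fin n, (ee K n ((k : ℕ) + 1)) ^ (if k = j then a k - 1 else a k)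
      = ∏ k : Fin n, (ee K n ((k : ℕ) + 1)) ^ a k := by
    rw [← Finset.mul_prod_erase univ
        (fun k : Fin n => (ee K n ((k : ℕ) + 1)) ^ (if k = j then a k - 1 else a k))
        (Finset.mem_univ j),
      ← Finset.mul_prod_erase univ (fun k : Fin n => (ee K n ((k : ℕ) + 1)) ^ a k)
        (Finset.mem_univ j)]
    rw [if_pos rfl, ← mul_assoc, ← pow_succ', Nat.sub_add_cancel h1]
    congr 1
    exact Finset.prod_congr rfl fun k hk => by rw [if_neg (Finset.ne_of_mem_erase hk)]
  rw [mul_mul_mul_comm, ← C_mul, hprod]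
  norm_num

theorem stmt_16 {K : Type*} [Field K] [CharZero K] {n : ℕ}
    (A : Finset (Fin n → ℕ)) (α : (Fin n → ℕ) → Fin n → K)
    (hα : ∀ a ∈ A, ∀ j : Fin n, α a j ≠ 0 → 1 ≤ a j)
    (r : Fin n → MvPolynomial (Fin n ⊕ Fin n) K)
    (hr : ∀ j : Fin n, r j = ∑ a ∈ A, C (α a j) *
      ∏ k : Fin n, (ee K n ((k : ℕ) + 1)) ^ (if k = j then a k - 1 else a k))
    (hzero : rename (Sum.elim Sum.inr Sum.inr : Fin n ⊕ Fin n → Fin n ⊕ Fin n)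
      (∑ j : Fin n, eps K n (j : ℕ) * r j) = 0) :
    ∀ a ∈ A, ∑ j : Fin n, (((j : ℕ) + 1 : K)) * α a j = 0 := by
  classical
  set c : (Fin n → ℕ) → K := fun a => ∑ j : Fin n, (((j : ℕ) + 1 : K)) * α a j with hc
  set P : MvPolynomial (Fin n) K :=
    ∑ a ∈ A, monomial (Finsupp.equivFunOnFinite.symm a) (c a) with hPdef
  -- the renamed sum equals the image of P
  have hmain : rename (Sum.inr : Fin n → Fin n ⊕ Fin n)
      (aeval (fun k : Fin n => esymm (Fin n) K ((k : ℕ) + 1)) P) = 0 := by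
    rw [← hzero]
    have lhs_eq : rename (Sum.inr : Fin n → Fin n ⊕ Fin n)
        (aeval (fun k : Fin n => esymm (Fin n) K ((k : ℕ) + 1)) P)
        = ∑ a ∈ A, C (c a) * ∏ k : Fin n, (ee K n ((k : ℕ) + 1)) ^ a k := by
      rw [hPdef, map_sum, map_sum]
      refine Finset.sum_congr rfl fun a _ => ?_
      rw [aeval_monomial, Finsupp.prod_fintype _ _ (fun k => pow_zero _)]
      simp only [Finsupp.coe_equivFunOnFinite_symm, map_mul, map_prod, map_pow]
      rw [algebraMap_eq, rename_C]
      refine congrArg _ (Finset.prod_congr rfl fun k _ => ?_)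
      rw [← ee_eq]
    have rhs_eq : rename (Sum.elim Sum.inr Sum.inr : Fin n ⊕ Fin n → Fin n ⊕ Fin n)
        (∑ j : Fin n, eps K n (j : ℕ) * r j)
        = ∑ a ∈ A, C (c a) * ∏ k : Fin n, (ee K n ((k : ℕ) + 1)) ^ a k := by
      rw [map_sum]
      have step : ∀ j : Fin n,
          rename (Sum.elim Sum.inr Sum.inr : Fin n ⊕ Fin n → Fin n ⊕ Fin n)
            (eps K n (j : ℕ) * r j)
          = ∑ a ∈ A, C ((((j : ℕ) + 1 : K)) * α a j) *
              ∏ k : Fin n, (ee K n ((k : ℕ) + 1)) ^ a k := by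
        intro j
        rw [hr j, map_mul, rename_eps, map_sum, Finset.mul_sum]
        refine Finset.sum_congr rfl fun a ha => ?_
        have hren : ∀ x : Fin n,
            rename (Sum.elim Sum.inr Sum.inr : Fin n ⊕ Fin n → Fin n ⊕ Fin n)
              (ee K n ((x : ℕ) + 1) ^ (if x = j then a x - 1 else a x))
            = ee K n ((x : ℕ) + 1) ^ (if x = j then a x - 1 else a x) := fun x => by
          rw [map_pow, rename_ee]
        rw [map_mul, rename_C, map_prod, Finset.prod_congr rfl fun x _ => hren x]
        exact key_term a j (α a j) (hα a ha j)
      rw [Finset.sum_congr rfl fun j _ => step j, Finset.sum_comm]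
      refine Finset.sum_congr rfl fun a _ => ?_
      rw [hc, ← Finset.sum_mul, map_sum]
    rw [lhs_eq, rhs_eq]
  -- deduce P = 0
  have hP0 : P = 0 := by
    have h1 : aeval (fun k : Fin n => esymm (Fin n) K ((k : ℕ) + 1)) P = 0 :=
      rename_injective _ Sum.inr_injective (by simpa using hmain)
    have h2 : esymmAlgHom (Fin n) K n P = 0 := by
      apply Subtype.ext
      rw [esymmAlgHom_apply, h1]
      exact (ZeroMemClass.coe_zero _).symm
    exact esymmAlgHom_injective K (le_of_eq (Fintype.card_fin n).symm)
      (h2.trans (map_zero _).symm)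
  intro a ha
  have := congrArg (coeff (Finsupp.equivFunOnFinite.symm a)) hP0
  rw [hPdef] at this
  simp only [coeff_zero] at this
  rw [← this]
  rw [coeff_sum]
  rw [Finset.sum_eq_single a (fun b _ hb => by
    rw [coeff_monomial, if_neg (fun h => hb (Finsupp.equivFunOnFinite.symm.injective h))])
    (fun h => absurd ha h)]
  rw [coeff_monomial, if_pos rfl]
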